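/- Each diagram Dg'_j = {(−L + jr, −L + (j+1)r)}, 0 ≤ j ≤ M−1, r = 2L/M, satisfies d_p(∅, Dg'_j) = r/2 < r for all p ∈ ℕ ∪ {∞}, and moreover no open d_p-ball of radius β·r with β = 1/2 can contain two distinct diagrams Dg'_j, Dg'_{j'}. Hence any cover of the open ball B_p(∅, r) in D_N^L by open balls of radius at most r/2 requires at least M balls. -/

import Mathlib

open scoped ENNReal

noncomputable section

/-- The `ℓ∞` distance of a point of the plane to the diagonal `Δ = {(x,x)}`. -/
def distDelta (q : ℝ × ℝ) : ℝ := (q.2 - q.1) / 2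

/-- A partial matching between two finite multisets of points of the plane:
a multiset of pairs whose first (resp. second) coordinates form a sub-multiset
of `D₁` (resp. `D₂`); unmatched points will be matched to the diagonal. -/
def IsMatching (P : Multiset ((ℝ × ℝ) × (ℝ × ℝ))) (D₁ D₂ : Multiset (ℝ × ℝ)) : Prop :=
  P.map Prod.fst ≤ D₁ ∧ P.map Prod.snd ≤ D₂

/-- The `p`-cost of a partial matching (for finite `p`): `p`-th root of the sum of the
`p`-th powers of the `ℓ∞` distances between matched points and of the `ℓ∞` distances
to the diagonal of unmatched points.  (Note: `dist` on `ℝ × ℝ` is the `ℓ∞` distance.) -/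
def costP (p : ℕ) (P : Multiset ((ℝ × ℝ) × (ℝ × ℝ))) (D₁ D₂ : Multiset (ℝ × ℝ)) : ℝ :=
  (((P.map fun ab => dist ab.1 ab.2 ^ p).sum
      + ((D₁ - P.map Prod.fst).map fun q => distDelta q ^ p).sum)
      + ((D₂ - P.map Prod.snd).map fun q => distDelta q ^ p).sum) ^ ((p : ℝ)⁻¹)

/-- The `∞`-cost (bottleneck cost) of a partial matching: the maximum of the `ℓ∞`
distances between matched points and of the `ℓ∞` distances to the diagonal of
unmatched points. -/
def costInf (P : Multiset ((ℝ × ℝ) × (ℝ × ℝ))) (D₁ D₂ : Multiset (ℝ × ℝ)) : ℝ :=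
  max ((P.map fun ab => dist ab.1 ab.2).fold max 0)
    (max (((D₁ - P.map Prod.fst).map distDelta).fold max 0)
      (((D₂ - P.map Prod.snd).map distDelta).fold max 0))

/-- The `p`-diagram distance, `p ∈ ℕ ∪ {∞}`: the infimum of the costs of partial
matchings between the two diagrams. -/
def diagramDist (p : ℕ∞) (D₁ D₂ : Multiset (ℝ × ℝ)) : ℝ :=
  sInf {c : ℝ | ∃ P, IsMatching P D₁ D₂ ∧
    c = WithTop.recTopCoe (costInf P D₁ D₂) (fun q => costP q P D₁ D₂) p}

/-- The space of persistence diagrams with at most `N` points, all contained in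
`[-L,L]²` (and lying strictly above the diagonal). -/
def DiagNL (N : ℕ) (L : ℝ) : Type :=
  {D : Multiset (ℝ × ℝ) // D.card ≤ N ∧
    ∀ q ∈ D, q.1 < q.2 ∧ -L ≤ q.1 ∧ q.1 ≤ L ∧ -L ≤ q.2 ∧ q.2 ≤ L}


/-- The single-point diagram `Dg'_j = {(−L + j·r, −L + (j+1)·r)}`. -/
def Dg' (L r : ℝ) (j : ℕ) : Multiset (ℝ × ℝ) := {(-L + (j : ℝ) * r, -L + ((j : ℝ) + 1) * r)}

/-- The empty persistence diagram, as an element of `D_N^L`. -/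
def emptyDiag (N : ℕ) (L : ℝ) : DiagNL N L := ⟨0, by simp [DiagNL]⟩

/-- The open ball of center `x` and radius `r` for a distance function `d`. -/
def ballD {X : Type*} (d : X → X → ℝ) (x : X) (r : ℝ) : Set X := {y | d x y < r}

-- lipschitz lemma
lemma distDelta_le (c q : ℝ × ℝ) : distDelta q ≤ distDelta c + dist c q := by
  rw [Prod.dist_eq, Real.dist_eq, Real.dist_eq]
  have h1 : c.1 - q.1 ≤ |c.1 - q.1| := le_abs_self _
  have h2 : -|c.2 - q.2| ≤ c.2 - q.2 := neg_abs_le _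
  have h3 : |c.1 - q.1| ≤ max |c.1 - q.1| |c.2 - q.2| := le_max_left _ _
  have h4 : |c.2 - q.2| ≤ max |c.1 - q.1| |c.2 - q.2| := le_max_right _ _
  unfold distDelta
  linarith

-- distance from zero
lemma diagramDist_zero_left (p : ℕ∞) (D : Multiset (ℝ × ℝ)) :
    diagramDist p 0 D = WithTop.recTopCoe (costInf 0 0 D) (fun q => costP q 0 0 D) p := by
  unfold diagramDist
  have : {c : ℝ | ∃ P, IsMatching P 0 D ∧
      c = WithTop.recTopCoe (costInf P 0 D) (fun q => costP q P 0 D) p}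
      = {WithTop.recTopCoe (costInf 0 0 D) (fun q => costP q 0 0 D) p} := by
    ext c
    simp only [Set.mem_setOf_eq, Set.mem_singleton_iff]
    constructor
    · rintro ⟨P, ⟨h1, _⟩, rfl⟩
      have hP : P = 0 := by
        have := Multiset.le_zero.mp h1
        exact Multiset.map_eq_zero.mp this
      rw [hP]
    · rintro rfl
      exact ⟨0, ⟨by simp [IsMatching], by simp [IsMatching]⟩, rfl⟩
  rw [this, csInf_singleton]
lemma cost_empty_singleton (q0 : ℝ × ℝ) (h : 0 ≤ distDelta q0) (p : ℕ∞) (hp : 1 ≤ p) :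
    WithTop.recTopCoe (costInf 0 0 {q0}) (fun q => costP q 0 0 {q0}) p = distDelta q0 := by
  cases p with
  | top =>
    have e : WithTop.recTopCoe (costInf 0 0 {q0}) (fun q => costP q 0 0 {q0}) (⊤ : ℕ∞)
        = costInf 0 0 {q0} := rfl
    rw [e]
    simp [costInf, Multiset.fold_singleton, max_eq_left h]
    exact h
  | coe q =>
    have e : WithTop.recTopCoe (costInf 0 0 {q0}) (fun q => costP q 0 0 {q0}) (q : ℕ∞)
        = costP q 0 0 {q0} := rfl
    have hq : q ≠ 0 := by
      rintro rfl
      simp at hp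
    rw [e]
    unfold costP
    simp [Real.pow_rpow_inv_natCast h hq]

lemma costP_one (P : Multiset ((ℝ × ℝ) × (ℝ × ℝ))) (D₁ D₂ : Multiset (ℝ × ℝ)) :
    costP 1 P D₁ D₂ = ((P.map fun ab => dist ab.1 ab.2).sum
      + ((D₁ - P.map Prod.fst).map distDelta).sum)
      + ((D₂ - P.map Prod.snd).map distDelta).sum := by
  simp [costP]

lemma exists_matched (C : Multiset (ℝ × ℝ)) (hC : ∀ x ∈ C, 0 ≤ distDelta x)
    (q0 : ℝ × ℝ) (ε : ℝ) (hε : ε ≤ distDelta q0) (h : diagramDist 1 C {q0} < ε) :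
    ∃ c ∈ C, dist c q0 + ((C.erase c).map distDelta).sum < ε := by
  have hne : {c : ℝ | ∃ P, IsMatching P C {q0} ∧
      c = WithTop.recTopCoe (costInf P C {q0}) (fun q => costP q P C {q0}) 1}.Nonempty :=
    ⟨_, ⟨0, ⟨by simp [IsMatching], by simp [IsMatching]⟩, rfl⟩⟩
  obtain ⟨a, ⟨P, ⟨h1, h2⟩, rfl⟩, ha⟩ := exists_lt_of_csInf_lt hne h
  have e : WithTop.recTopCoe (costInf P C {q0}) (fun q => costP q P C {q0}) (1 : ℕ∞)
      = costP 1 P C {q0} := rfl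
  change costP 1 P C {q0} < ε at ha
  rw [costP_one] at ha
  rcases Multiset.le_singleton.mp h2 with h0 | hs
  · have hP : P = 0 := Multiset.map_eq_zero.mp h0
    subst hP
    simp only [Multiset.map_zero, Multiset.sum_zero, Multiset.sub_zero, zero_add] at ha
    have hs1 : 0 ≤ ((C : Multiset (ℝ × ℝ)).map distDelta).sum := by
      apply Multiset.sum_nonneg
      intro x hx
      obtain ⟨y, hy, rfl⟩ := Multiset.mem_map.mp hx
      exact hC y hy
    have : (({q0} : Multiset (ℝ × ℝ)).map distDelta).sum = distDelta q0 := by simp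
    rw [this] at ha
    linarith
  · have hcard : P.card = 1 := by
      have := congrArg Multiset.card hs
      simpa using this
    obtain ⟨ab, rfl⟩ := Multiset.card_eq_one.mp hcard
    have hab2 : ab.2 = q0 := by simpa using hs
    have hmem : ab.1 ∈ C := Multiset.singleton_le.mp (by simpa using h1)
    refine ⟨ab.1, hmem, ?_⟩
    simp only [Multiset.map_singleton, Multiset.sum_singleton, hab2,
      Multiset.sub_singleton] at ha
    simpa using ha

lemma no_two_main (C : Multiset (ℝ × ℝ)) (hC : ∀ x ∈ C, 0 ≤ distDelta x)
    (q q' : ℝ × ℝ) (ρ : ℝ) (hq : distDelta q = ρ) (hq' : distDelta q' = ρ)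
    (hd : 2 * ρ ≤ dist q q') :
    ¬ (diagramDist 1 C {q} < ρ ∧ diagramDist 1 C {q'} < ρ) := by
  rintro ⟨h1, h2⟩
  obtain ⟨c, hc, hc1⟩ := exists_matched C hC q ρ hq.ge h1
  obtain ⟨c', hc', hc2⟩ := exists_matched C hC q' ρ hq'.ge h2
  have nn : ∀ (s : Multiset (ℝ × ℝ)), s ≤ C → 0 ≤ (s.map distDelta).sum := by
    intro s hs
    apply Multiset.sum_nonneg
    intro x hx
    obtain ⟨y, hy, rfl⟩ := Multiset.mem_map.mp hx
    exact hC y (Multiset.mem_of_le hs hy)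
  by_cases hcc : c = c'
  · subst hcc
    have ht : dist q q' ≤ dist c q + dist c q' := by
      have := dist_triangle q c q'
      rw [dist_comm q c] at this
      linarith
    have s1 := nn _ (Multiset.erase_le c C)
    have s2 := nn _ (Multiset.erase_le c C)
    linarith
  · have m1 : c' ∈ C.erase c := (Multiset.mem_erase_of_ne (Ne.symm hcc)).mpr hc'
    have m2 : c ∈ C.erase c' := (Multiset.mem_erase_of_ne hcc).mpr hc
    have l1 : distDelta c' ≤ ((C.erase c).map distDelta).sum := by
      apply Multiset.single_le_sum
      · intro x hx
        obtain ⟨y, hy, rfl⟩ := Multiset.mem_map.mp hx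
        exact hC y (Multiset.mem_of_mem_erase hy)
      · exact Multiset.mem_map_of_mem _ m1
    have l2 : distDelta c ≤ ((C.erase c').map distDelta).sum := by
      apply Multiset.single_le_sum
      · intro x hx
        obtain ⟨y, hy, rfl⟩ := Multiset.mem_map.mp hx
        exact hC y (Multiset.mem_of_mem_erase hy)
      · exact Multiset.mem_map_of_mem _ m2
    have t1 := distDelta_le c q
    have t2 := distDelta_le c' q'
    linarith

lemma distDelta_Dg' (L r : ℝ) (j : ℕ) :
    distDelta (-L + (j : ℝ) * r, -L + ((j : ℝ) + 1) * r) = r / 2 := by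
  simp only [distDelta]
  ring

lemma dist_Dg' (L r : ℝ) (hr : 0 ≤ r) {j j' : ℕ} (h : j ≠ j') :
    r ≤ dist ((-L + (j : ℝ) * r, -L + ((j : ℝ) + 1) * r))
      ((-L + (j' : ℝ) * r, -L + ((j' : ℝ) + 1) * r)) := by
  have h1 : (1 : ℝ) ≤ |(j : ℝ) - (j' : ℝ)| := by
    have h0 : (j : ℤ) - (j' : ℤ) ≠ 0 := sub_ne_zero.mpr (by exact_mod_cast h)
    have hi : (1 : ℤ) ≤ |(j : ℤ) - (j' : ℤ)| := Int.one_le_abs h0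
    have e : |(j : ℝ) - (j' : ℝ)| = ((|(j : ℤ) - (j' : ℤ)| : ℤ) : ℝ) := by
      push_cast
      ring
    rw [e]
    exact_mod_cast hi
  have key : r ≤ |(-L + (j : ℝ) * r) - (-L + (j' : ℝ) * r)| := by
    have e : (-L + (j : ℝ) * r) - (-L + (j' : ℝ) * r) = ((j : ℝ) - j') * r := by ring
    rw [e, abs_mul, abs_of_nonneg hr]
    nlinarith
  calc r ≤ |(-L + (j : ℝ) * r) - (-L + (j' : ℝ) * r)| := key
    _ = dist (-L + (j : ℝ) * r) (-L + (j' : ℝ) * r) := (Real.dist_eq _ _).symm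
    _ ≤ _ := by
      rw [Prod.dist_eq]
      exact le_sup_left

/-- With `r = 2L/M`: each `Dg'_j` (`j < M`) satisfies `d_p(∅, Dg'_j) = r/2 < r` for
every `p ∈ ℕ ∪ {∞}` with `p ≥ 1`; no open `d_1`-ball of radius `r/2` contains two
distinct diagrams `Dg'_j`, `Dg'_{j'}`; hence any cover of the open ball `B_1(∅, r)`
in `D_N^L` by open balls of radius at most `r/2` requires at least `M` balls. -/
theorem cover_of_ball_needs_M_balls (N : ℕ) (hN : 1 ≤ N) (L : ℝ) (hL : 0 < L)
    (M : ℕ) (hM : 1 ≤ M) (r : ℝ) (hr : r = 2 * L / M) :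
    (∀ p : ℕ∞, 1 ≤ p → ∀ j : ℕ, j < M →
      diagramDist p 0 (Dg' L r j) = r / 2 ∧ r / 2 < r) ∧
    (∀ j j' : ℕ, j < M → j' < M → j ≠ j' →
      ∀ C : DiagNL N L, ¬ (diagramDist 1 C.1 (Dg' L r j) < r / 2 ∧
        diagramDist 1 C.1 (Dg' L r j') < r / 2)) ∧
    (∀ (t : Finset (DiagNL N L)) (ρ : DiagNL N L → ℝ), (∀ c ∈ t, ρ c ≤ r / 2) →
      ballD (fun D D' : DiagNL N L => diagramDist 1 D.1 D'.1) (emptyDiag N L) r ⊆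
        (⋃ c ∈ t, ballD (fun D D' : DiagNL N L => diagramDist 1 D.1 D'.1) c (ρ c)) →
      M ≤ t.card) := by
  have hMpos : (0 : ℝ) < M := by exact_mod_cast hM
  have hrpos : 0 < r := by
    rw [hr]
    apply div_pos <;> linarith
  have hA : ∀ p : ℕ∞, 1 ≤ p → ∀ j : ℕ, j < M → diagramDist p 0 (Dg' L r j) = r / 2 := by
    intro p hp j _
    rw [show Dg' L r j = {(-L + (j : ℝ) * r, -L + ((j : ℝ) + 1) * r)} from rfl,
      diagramDist_zero_left, cost_empty_singleton _ (by rw [distDelta_Dg']; linarith) p hp,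
      distDelta_Dg']
  have hB : ∀ j j' : ℕ, j < M → j' < M → j ≠ j' →
      ∀ C : DiagNL N L, ¬ (diagramDist 1 C.1 (Dg' L r j) < r / 2 ∧
        diagramDist 1 C.1 (Dg' L r j') < r / 2) := by
    intro j j' _ _ hne C
    have hC : ∀ x ∈ C.1, 0 ≤ distDelta x := by
      intro x hx
      have h1 := (C.2.2 x hx).1
      unfold distDelta
      linarith
    have hd := dist_Dg' L r hrpos.le hne
    exact no_two_main C.1 hC _ _ (r / 2) (distDelta_Dg' L r j) (distDelta_Dg' L r j')
      (by linarith)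
  refine ⟨fun p hp j hj => ⟨hA p hp j hj, by linarith⟩, hB, ?_⟩
  intro t ρ hρ hcov
  have hMr : (M : ℝ) * r = 2 * L := by
    rw [hr]
    field_simp
  have hmemD : ∀ j : Fin M, (Dg' L r (j : ℕ)).card ≤ N ∧
      ∀ q ∈ Dg' L r (j : ℕ), q.1 < q.2 ∧ -L ≤ q.1 ∧ q.1 ≤ L ∧ -L ≤ q.2 ∧ q.2 ≤ L := by
    intro j
    have hj1 : ((j : ℕ) : ℝ) + 1 ≤ (M : ℝ) := by exact_mod_cast j.2
    have hj0 : (0 : ℝ) ≤ ((j : ℕ) : ℝ) := Nat.cast_nonneg _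
    constructor
    · simpa [Dg'] using hN
    · intro q hq
      have hq' : q = (-L + ((j : ℕ) : ℝ) * r, -L + (((j : ℕ) : ℝ) + 1) * r) := by
        simpa [Dg'] using hq
      subst hq'
      refine ⟨by simp; nlinarith, by simp; nlinarith, by simp; nlinarith,
        by simp; nlinarith, by simp; nlinarith⟩
  have hball : ∀ j : Fin M, (⟨Dg' L r (j : ℕ), hmemD j⟩ : DiagNL N L) ∈ ballD
      (fun D D' : DiagNL N L => diagramDist 1 D.1 D'.1) (emptyDiag N L) r := by
    intro j
    have : diagramDist 1 0 (Dg' L r (j : ℕ)) = r / 2 := hA 1 le_rfl (j : ℕ) j.2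
    show diagramDist 1 0 (Dg' L r (j : ℕ)) < r
    linarith
  have hex : ∀ j : Fin M, ∃ c, c ∈ t ∧ diagramDist 1 c.1 (Dg' L r (j : ℕ)) < ρ c := by
    intro j
    have := hcov (hball j)
    simp only [Set.mem_iUnion, ballD, Set.mem_setOf_eq] at this
    obtain ⟨c, hc, hlt⟩ := Set.mem_iUnion₂.mp (hcov (hball j))
    exact ⟨c, hc, hlt⟩
  choose f hf hlt using hex
  have hinj : Function.Injective f := by
    intro j j' heq
    by_contra hne
    have hne' : (j : ℕ) ≠ (j' : ℕ) := fun h => hne (Fin.ext h)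
    apply hB (j : ℕ) (j' : ℕ) j.2 j'.2 hne' (f j)
    constructor
    · exact lt_of_lt_of_le (hlt j) (hρ _ (hf j))
    · rw [heq]
      exact lt_of_lt_of_le (hlt j') (hρ _ (hf j'))
  have hcard : Fintype.card (Fin M) ≤ Fintype.card {x // x ∈ t} := by
    apply Fintype.card_le_of_injective (fun j => ⟨f j, hf j⟩)
    intro a b hab
    exact hinj (congrArg Subtype.val hab)
  simpa [Fintype.card_coe] using hcard

end
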